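/- (Uniqueness of C¹ solutions of the initial–inflow-boundary value problem) Let X ⊂ ℝ³ be a bounded C¹ domain. If ψ₁ and ψ₂ are C¹ solutions on [0,T] × X̄ × S² of ∂_t ψ + Ω·∇_x ψ = σ_s Sψ − σ_t ψ (with S the isotropic angular average, σ_s, σ_t ≥ 0 constants) with the same initial data and the same inflow boundary data on γ₋, then ψ₁ = ψ₂. -/

import Mathlib

open MeasureTheory Real Set
open scoped RealInnerProductSpace
open scoped RealInnerProductSpace

abbrev EucV : Type := EuclideanSpace ℝ (Fin 3)

lemma aux_cs {α : Type*} [MeasurableSpace α] (μ : Measure α) [IsFiniteMeasure μ] (f : α → ℝ)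
    (hf : Integrable f μ) (hf2 : Integrable (fun a => f a * f a) μ) :
    (∫ a, f a ∂μ) * (∫ a, f a ∂μ) ≤ (μ univ).toReal * ∫ a, f a * f a ∂μ := by
  have key : ∀ x : ℝ, 0 ≤ (μ univ).toReal * (x * x) + (2 * ∫ a, f a ∂μ) * x + ∫ a, f a * f a ∂μ := by
    intro x
    have h0 : 0 ≤ ∫ a, (x + f a) * (x + f a) ∂μ :=
      integral_nonneg fun a => mul_self_nonneg _
    have i0 : Integrable (fun a => 2 * x * f a) μ := hf.const_mul (2 * x)
    have i1 : Integrable (fun a => x * x + 2 * x * f a) μ := (integrable_const (x * x)).add i0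
    have hexp : ∫ a, (x + f a) * (x + f a) ∂μ
        = (μ univ).toReal * (x * x) + (2 * ∫ a, f a ∂μ) * x + ∫ a, f a * f a ∂μ := by
      have h1 : (fun a => (x + f a) * (x + f a))
          = fun a => (x * x + 2 * x * f a) + f a * f a := by
        funext a; ring
      rw [h1, integral_add i1 hf2, integral_add (integrable_const (x * x)) i0, integral_const,
        integral_const_mul]
      simp only [smul_eq_mul, measureReal_def]; ring
    linarith [hexp ▸ h0]
  have hd := discrim_le_zero key
  rw [discrim] at hd
  nlinarith [hd]

lemma aux_grad_sq {f : EucV → ℝ} {g x : EucV} (h : HasGradientAt f g x) :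
    HasGradientAt (fun y => f y * f y) ((2 * f x) • g) x := by
  rw [hasGradientAt_iff_hasFDerivAt] at h ⊢
  have h2 := h.mul h
  refine h2.congr_fderiv ?_
  ext v
  simp only [ContinuousLinearMap.add_apply, ContinuousLinearMap.coe_smul',
    Pi.smul_apply, smul_eq_mul, (InnerProductSpace.toDual ℝ EucV).map_smul,
    InnerProductSpace.toDual_apply_apply, real_inner_smul_left]
  ring_nf
  rfl
open MeasureTheory Real Set
open scoped RealInnerProductSpace



lemma aux_sphere_compact : IsCompact {Ω : EucV | ‖Ω‖ = 1} := by
  have : {Ω : EucV | ‖Ω‖ = 1} = Metric.sphere (0 : EucV) 1 := by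
    ext Ω; simp [Metric.mem_sphere, dist_zero_right]
  rw [this]; exact isCompact_sphere 0 1

lemma aux_restrict_finite (X : Set EucV) (hXb : Bornology.IsBounded X) :
    IsFiniteMeasure (volume.restrict X) := by
  constructor
  rw [Measure.restrict_apply_univ]
  exact lt_of_le_of_lt (measure_mono subset_closure) hXb.isCompact_closure.measure_lt_top

/-- a.e. membership in sphere × X for the product measure -/
lemma aux_ae_prod (σS : Measure EucV) [IsFiniteMeasure σS]
    (hσsupp : σS {Ω : EucV | ‖Ω‖ = 1}ᶜ = 0)
    (X : Set EucV) (hX : MeasurableSet X) (hXb : Bornology.IsBounded X) :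
    ∀ᵐ p ∂(σS.prod (volume.restrict X)), ‖p.1‖ = 1 ∧ p.2 ∈ X := by
  haveI := aux_restrict_finite X hXb
  rw [ae_iff]
  have hsub : {p : EucV × EucV | ¬ (‖p.1‖ = 1 ∧ p.2 ∈ X)}
      ⊆ ({Ω : EucV | ‖Ω‖ = 1}ᶜ ×ˢ univ) ∪ (univ ×ˢ Xᶜ) := by
    intro p hp
    simp only [mem_setOf_eq, not_and_or] at hp
    rcases hp with h | h
    · exact Or.inl (by simp [h])
    · exact Or.inr (by simp [h])
  refine measure_mono_null hsub (measure_union_null ?_ ?_)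
  · rw [Measure.prod_prod, hσsupp, zero_mul]
  · rw [Measure.prod_prod, Measure.restrict_apply (MeasurableSet.compl hX)]
    simp

lemma aux_integrable_prod (σS : Measure EucV) [IsFiniteMeasure σS]
    (hσsupp : σS {Ω : EucV | ‖Ω‖ = 1}ᶜ = 0)
    (X : Set EucV) (hX : MeasurableSet X) (hXb : Bornology.IsBounded X)
    (g : EucV × EucV → ℝ) (hg : Continuous g) :
    Integrable g (σS.prod (volume.restrict X)) := by
  haveI := aux_restrict_finite X hXb
  obtain ⟨C, hC⟩ := (aux_sphere_compact.prod hXb.isCompact_closure).exists_bound_of_continuousOn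
    hg.continuousOn
  refine ⟨hg.aestronglyMeasurable, ?_⟩
  apply HasFiniteIntegral.of_bounded (C := C)
  filter_upwards [aux_ae_prod σS hσsupp X hX hXb] with p hp
  exact hC p ⟨hp.1, subset_closure hp.2⟩

/-- ae of σS membership in sphere -/
lemma aux_ae_sigma (σS : Measure EucV) [IsFiniteMeasure σS]
    (hσsupp : σS {Ω : EucV | ‖Ω‖ = 1}ᶜ = 0) :
    ∀ᵐ Ω ∂σS, ‖Ω‖ = 1 := by
  rw [ae_iff]
  exact measure_mono_null (fun Ω h => h) hσsupp

lemma aux_integrable_sigma (σS : Measure EucV) [IsFiniteMeasure σS]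
    (hσsupp : σS {Ω : EucV | ‖Ω‖ = 1}ᶜ = 0)
    (g : EucV → ℝ) (hg : Continuous g) : Integrable g σS := by
  obtain ⟨C, hC⟩ := aux_sphere_compact.exists_bound_of_continuousOn hg.continuousOn
  refine ⟨hg.aestronglyMeasurable, ?_⟩
  apply HasFiniteIntegral.of_bounded (C := C)
  filter_upwards [aux_ae_sigma σS hσsupp] with Ω hΩ
  exact hC Ω hΩ

lemma aux_integrableOn_X (X : Set EucV) (hXb : Bornology.IsBounded X)
    (g : EucV → ℝ) (hg : Continuous g) : IntegrableOn g X volume :=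
  (hg.continuousOn.integrableOn_compact hXb.isCompact_closure).mono_set subset_closure

/-- integrability over σS of a parametric set-integral over X -/
lemma aux_integrable_param (σS : Measure EucV) [IsFiniteMeasure σS]
    (hσsupp : σS {Ω : EucV | ‖Ω‖ = 1}ᶜ = 0)
    (X : Set EucV) (hX : MeasurableSet X) (hXb : Bornology.IsBounded X)
    (g : EucV × EucV → ℝ) (hg : Continuous g) :
    Integrable (fun Ω => ∫ x in X, g (Ω, x)) σS := by
  haveI := aux_restrict_finite X hXb
  obtain ⟨C, hC⟩ := (aux_sphere_compact.prod hXb.isCompact_closure).exists_bound_of_continuousOn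
    hg.continuousOn
  refine ⟨(hg.stronglyMeasurable.integral_prod_right' (ν := volume.restrict X)).aestronglyMeasurable, ?_⟩
  apply HasFiniteIntegral.of_bounded (C := C * ((volume.restrict X) univ).toReal)
  filter_upwards [aux_ae_sigma σS hσsupp] with Ω hΩ
  apply norm_integral_le_of_norm_le_const
  filter_upwards [ae_restrict_mem hX] with x hx
  exact hC (Ω, x) ⟨hΩ, subset_closure hx⟩

/-- integrability over X of a parametric integral over σS -/
lemma aux_integrableOn_param (σS : Measure EucV) [IsFiniteMeasure σS]
    (hσsupp : σS {Ω : EucV | ‖Ω‖ = 1}ᶜ = 0)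
    (X : Set EucV) (hX : MeasurableSet X) (hXb : Bornology.IsBounded X)
    (g : EucV × EucV → ℝ) (hg : Continuous g) :
    Integrable (fun x => ∫ Ω, g (Ω, x) ∂σS) (volume.restrict X) := by
  haveI := aux_restrict_finite X hXb
  obtain ⟨C, hC⟩ := (aux_sphere_compact.prod hXb.isCompact_closure).exists_bound_of_continuousOn
    hg.continuousOn
  refine ⟨(hg.stronglyMeasurable.integral_prod_left' (μ := σS)).aestronglyMeasurable, ?_⟩
  apply HasFiniteIntegral.of_bounded (C := C * (σS univ).toReal)
  filter_upwards [ae_restrict_mem hX] with x hx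
  apply norm_integral_le_of_norm_le_const
  filter_upwards [aux_ae_sigma σS hσsupp] with Ω hΩ
  exact hC (Ω, x) ⟨hΩ, subset_closure hx⟩

lemma aux_energy
    (T : ℝ) (hT : 0 < T)
    (X : Set EucV) (hX : MeasurableSet X) (hXopen : IsOpen X)
    (hXb : Bornology.IsBounded X)
    (B : Set EucV) (hB : B = frontier X)
    (μB : Measure EucV) [IsFiniteMeasure μB] (hμB : μB Bᶜ = 0)
    (n : EucV → EucV)
    (hdiv : ∀ (Ω : EucV) (f : EucV → ℝ) (fgrad : EucV → EucV),
      ContinuousOn f (closure X) →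
      (∀ x ∈ X, HasGradientAt f (fgrad x) x) →
      ContinuousOn fgrad (closure X) →
      ∫ x in X, ⟪Ω, fgrad x⟫ = ∫ x in B, f x * ⟪Ω, n x⟫ ∂μB)
    (σS : Measure EucV) [IsFiniteMeasure σS]
    (hσsupp : σS {Ω : EucV | ‖Ω‖ = 1}ᶜ = 0)
    (hσfull : ∀ O : Set EucV, IsOpen O → (O ∩ {Ω : EucV | ‖Ω‖ = 1}).Nonempty → 0 < σS O)
    (σs σt : ℝ) (hσs : 0 ≤ σs) (hσt : 0 ≤ σt)
    (e et : ℝ → EucV → EucV → ℝ) (eg : ℝ → EucV → EucV → EucV)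
    (het : ∀ t x Ω, HasDerivAt (fun s => e s x Ω) (et t x Ω) t)
    (heg : ∀ t x Ω, HasGradientAt (fun y => e t y Ω) (eg t x Ω) x)
    (hce : Continuous (fun p : ℝ × EucV × EucV => e p.1 p.2.1 p.2.2))
    (hcet : Continuous (fun p : ℝ × EucV × EucV => et p.1 p.2.1 p.2.2))
    (hceg : Continuous (fun p : ℝ × EucV × EucV => eg p.1 p.2.1 p.2.2))
    (hpde : ∀ t ∈ Icc 0 T, ∀ x ∈ X, ∀ Ω : EucV, ‖Ω‖ = 1 →
       et t x Ω + ⟪Ω, eg t x Ω⟫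
         = σs * ((1 / (4 * π)) * ∫ Ω', e t x Ω' ∂σS) - σt * e t x Ω)
    (hic : ∀ x ∈ closure X, ∀ Ω : EucV, ‖Ω‖ = 1 → e 0 x Ω = 0)
    (hbc : ∀ t ∈ Icc 0 T, ∀ x ∈ B, ∀ Ω : EucV, ‖Ω‖ = 1 → ⟪n x, Ω⟫ < 0 → e t x Ω = 0) :
    ∀ t ∈ Icc 0 T, ∀ x ∈ closure X, ∀ Ω : EucV, ‖Ω‖ = 1 → e t x Ω = 0 := by
  haveI hfinX := aux_restrict_finite X hXb
  set ν := σS.prod (volume.restrict X) with hνdef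
  haveI : IsFiniteMeasure ν := by rw [hνdef]; infer_instance
  have hK : IsCompact (closure X) := hXb.isCompact_closure
  have hπ : (0:ℝ) < π := pi_pos
  -- continuity in (Ω, x) for fixed t
  have hswap : Continuous (fun p : EucV × EucV => (p.2, p.1)) :=
    continuous_snd.prodMk continuous_fst
  have conte : ∀ t, Continuous (fun p : EucV × EucV => e t p.2 p.1) := fun t =>
    hce.comp (continuous_const.prodMk hswap)
  have contet : ∀ t, Continuous (fun p : EucV × EucV => et t p.2 p.1) := fun t =>
    hcet.comp (continuous_const.prodMk hswap)
  have conteg : ∀ t, Continuous (fun p : EucV × EucV => eg t p.2 p.1) := fun t =>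
    hceg.comp (continuous_const.prodMk hswap)
  have contex : ∀ t Ω, Continuous (fun x : EucV => e t x Ω) := fun t Ω =>
    hce.comp (continuous_const.prodMk (continuous_id.prodMk continuous_const))
  have conteΩ : ∀ t x, Continuous (fun Ω : EucV => e t x Ω) := fun t x =>
    hce.comp (continuous_const.prodMk (continuous_const.prodMk continuous_id))
  -- scattering average
  set c : ℝ → EucV → ℝ := fun t x => (1 / (4 * π)) * ∫ Ω', e t x Ω' ∂σS with hcdef
  have hintΩ : ∀ t x, Integrable (fun Ω' => e t x Ω') σS := fun t x =>
    aux_integrable_sigma σS hσsupp _ (conteΩ t x)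
  have hintΩ2 : ∀ t x, Integrable (fun Ω' => e t x Ω' * e t x Ω') σS := fun t x =>
    aux_integrable_sigma σS hσsupp _ ((conteΩ t x).mul (conteΩ t x))
  have hccont : ∀ t, Continuous (fun x => c t x) := by
    intro t
    apply continuous_const.mul
    rw [continuous_iff_continuousAt]
    intro x₀
    obtain ⟨C, hC⟩ := ((isCompact_closedBall x₀ 1).prod aux_sphere_compact).exists_bound_of_continuousOn
      (Continuous.continuousOn (f := fun q : EucV × EucV => e t q.1 q.2)
        (hce.comp (continuous_const.prodMk continuous_id)))
    apply continuousAt_of_dominated (bound := fun _ => C)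
    · exact Filter.Eventually.of_forall fun x => (conteΩ t x).aestronglyMeasurable
    · filter_upwards [Filter.eventually_of_mem (Metric.closedBall_mem_nhds x₀ one_pos)
        (fun x hx => hx)] with x hx
      filter_upwards [aux_ae_sigma σS hσsupp] with Ω' hΩ'
      exact hC (x, Ω') ⟨hx, hΩ'⟩
    · exact integrable_const C
    · filter_upwards [aux_ae_sigma σS hσsupp] with Ω' _
      exact (contex t Ω').continuousAt
  -- energy functional
  set Fe : ℝ → EucV × EucV → ℝ := fun t p => e t p.2 p.1 * e t p.2 p.1 with hFedef
  set Fe' : ℝ → EucV × EucV → ℝ :=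
    fun t p => et t p.2 p.1 * e t p.2 p.1 + e t p.2 p.1 * et t p.2 p.1 with hFe'def
  set E : ℝ → ℝ := fun t => ∫ p, Fe t p ∂ν with hEdef
  have hFeInt : ∀ t, Integrable (Fe t) ν := fun t =>
    aux_integrable_prod σS hσsupp X hX hXb _ ((conte t).mul (conte t))
  have hFe'Int : ∀ t, Integrable (Fe' t) ν := fun t =>
    aux_integrable_prod σS hσsupp X hX hXb _
      (((contet t).mul (conte t)).add ((conte t).mul (contet t)))
  have hFe'contj : Continuous (fun q : ℝ × (EucV × EucV) => Fe' q.1 q.2) := by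
    have hmk : Continuous (fun q : ℝ × (EucV × EucV) => (q.1, q.2.2, q.2.1)) :=
      continuous_fst.prodMk ((continuous_snd.comp continuous_snd).prodMk
        (continuous_fst.comp continuous_snd))
    exact ((hcet.comp hmk).mul (hce.comp hmk)).add ((hce.comp hmk).mul (hcet.comp hmk))
  have hEderiv : ∀ t₀ : ℝ, HasDerivAt E (∫ p, Fe' t₀ p ∂ν) t₀ := by
    intro t₀
    obtain ⟨C, hC⟩ := ((isCompact_Icc (a := t₀ - 1) (b := t₀ + 1)).prod
      (aux_sphere_compact.prod hK)).exists_bound_of_continuousOn hFe'contj.continuousOn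
    have hres := hasDerivAt_integral_of_dominated_loc_of_deriv_le (μ := ν) (F := Fe) (F' := Fe')
      (x₀ := t₀) (bound := fun _ => C) (Metric.ball_mem_nhds t₀ one_pos)
      (Filter.Eventually.of_forall fun s => ((conte s).mul (conte s)).aestronglyMeasurable)
      (hFeInt t₀) ((hFe'Int t₀).aestronglyMeasurable) ?_ (integrable_const C) ?_
    · exact hres.2
    · filter_upwards [aux_ae_prod σS hσsupp X hX hXb] with p hp
      intro s hs
      have hsI : s ∈ Icc (t₀ - 1) (t₀ + 1) := by
        rw [Metric.mem_ball, Real.dist_eq] at hs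
        constructor <;> [linarith [abs_lt.1 hs |>.2, abs_lt.1 hs |>.1];
          linarith [abs_lt.1 hs |>.1, abs_lt.1 hs |>.2]]
      exact hC (s, p) ⟨hsI, hp.1, subset_closure hp.2⟩
    · exact Filter.Eventually.of_forall fun p => fun s _ =>
        (het s p.2 p.1).mul (het s p.2 p.1)
  -- constants
  set M : ℝ := (σS univ).toReal with hMdef
  have hM : 0 ≤ M := ENNReal.toReal_nonneg
  set Cst : ℝ := σs * M / (2 * π) with hCstdef
  have hCstnn : 0 ≤ Cst := by positivity
  -- the key differential inequality
  have hkey : ∀ t ∈ Icc 0 T, ∫ p, Fe' t p ∂ν ≤ Cst * E t := by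
    intro t ht
    -- the three per-Ω quantities
    set bal : EucV → ℝ := fun Ω => ∫ x in X, ⟪Ω, (2 * e t x Ω) • eg t x Ω⟫ with hbaldef
    set I : EucV → ℝ := fun Ω => ∫ x in X, e t x Ω * c t x with hIdef
    set J : EucV → ℝ := fun Ω => ∫ x in X, e t x Ω * e t x Ω with hJdef
    -- pointwise-in-Ω x-integral identity
    have step1 : ∀ Ω : EucV, ‖Ω‖ = 1 →
        ∫ x in X, Fe' t (Ω, x) = -(bal Ω) + (2 * σs) * I Ω - (2 * σt) * J Ω := by
      intro Ω hΩ
      have hpt : EqOn (fun x => Fe' t (Ω, x))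
          (fun x => -(⟪Ω, (2 * e t x Ω) • eg t x Ω⟫) + (2 * σs) * (e t x Ω * c t x)
            - (2 * σt) * (e t x Ω * e t x Ω)) X := by
        intro x hx
        have hp := hpde t ht x hx Ω hΩ
        have hin : ⟪Ω, (2 * e t x Ω) • eg t x Ω⟫ = (2 * e t x Ω) * ⟪Ω, eg t x Ω⟫ :=
          real_inner_smul_right _ _ _
        have hetv : et t x Ω = σs * c t x - σt * e t x Ω - ⟪Ω, eg t x Ω⟫ := by
          rw [hcdef]; linarith [hp]
        simp only [Fe', hetv, hin]
        ring
      rw [setIntegral_congr_fun hX hpt]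
      have i1 : IntegrableOn (fun x => ⟪Ω, (2 * e t x Ω) • eg t x Ω⟫) X volume :=
        aux_integrableOn_X X hXb _ (Continuous.inner continuous_const
          ((continuous_const.mul (contex t Ω)).smul
            (hceg.comp (continuous_const.prodMk (continuous_id.prodMk continuous_const)))))
      have i2 : IntegrableOn (fun x => (2 * σs) * (e t x Ω * c t x)) X volume :=
        aux_integrableOn_X X hXb _ (continuous_const.mul ((contex t Ω).mul (hccont t)))
      have i3 : IntegrableOn (fun x => (2 * σt) * (e t x Ω * e t x Ω)) X volume :=
        aux_integrableOn_X X hXb _ (continuous_const.mul ((contex t Ω).mul (contex t Ω)))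
      have hs1 := integral_sub (μ := volume.restrict X)
        (f := fun x => -(⟪Ω, (2 * e t x Ω) • eg t x Ω⟫) + (2 * σs) * (e t x Ω * c t x))
        (g := fun x => (2 * σt) * (e t x Ω * e t x Ω)) (i1.neg.add i2) i3
      have hs2 := integral_add (μ := volume.restrict X)
        (f := fun x => -(⟪Ω, (2 * e t x Ω) • eg t x Ω⟫))
        (g := fun x => (2 * σs) * (e t x Ω * c t x)) i1.neg i2
      have hs3 := integral_neg (μ := volume.restrict X)
        (f := fun x => ⟪Ω, (2 * e t x Ω) • eg t x Ω⟫)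
      rw [hs1, hs2, hs3, integral_const_mul, integral_const_mul]
    -- boundary sign
    have step2 : ∀ Ω : EucV, ‖Ω‖ = 1 → 0 ≤ bal Ω := by
      intro Ω hΩ
      have hgg : ∀ x ∈ X, HasGradientAt (fun y => e t y Ω * e t y Ω)
          ((fun x => (2 * e t x Ω) • eg t x Ω) x) x := fun x _ => aux_grad_sq (heg t x Ω)
      have hdiveq := hdiv Ω (fun x => e t x Ω * e t x Ω)
        (fun x => (2 * e t x Ω) • eg t x Ω)
        (((contex t Ω).mul (contex t Ω)).continuousOn) hgg
        (((continuous_const.mul (contex t Ω)).smul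
          (hceg.comp (continuous_const.prodMk (continuous_id.prodMk continuous_const)))).continuousOn)
      rw [hbaldef]
      simp only []
      rw [hdiveq]
      apply integral_nonneg_of_ae
      have hBmeas : MeasurableSet B := by rw [hB]; exact isClosed_frontier.measurableSet
      filter_upwards [ae_restrict_mem hBmeas] with x hxB
      rcases lt_or_ge ⟪n x, Ω⟫ 0 with hlt | hge
      · have h0 := hbc t ht x hxB Ω hΩ hlt
        simp [h0]
      · have h2 : 0 ≤ ⟪Ω, n x⟫ := by rw [real_inner_comm]; exact hge
        exact mul_nonneg (mul_self_nonneg _) h2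
    -- assemble over Ω
    have hsplitP : ∫ p, Fe' t p ∂ν = ∫ Ω, (∫ x in X, Fe' t (Ω, x)) ∂σS :=
      integral_prod _ (hFe'Int t)
    have hcongrΩ : ∫ Ω, (∫ x in X, Fe' t (Ω, x)) ∂σS
        = ∫ Ω, (-(bal Ω) + (2 * σs) * I Ω - (2 * σt) * J Ω) ∂σS := by
      apply integral_congr_ae
      filter_upwards [aux_ae_sigma σS hσsupp] with Ω hΩ
      exact step1 Ω hΩ
    have ibal : Integrable bal σS := by
      apply aux_integrable_param σS hσsupp X hX hXb
        (fun p : EucV × EucV => ⟪p.1, (2 * e t p.2 p.1) • eg t p.2 p.1⟫)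
      exact Continuous.inner continuous_fst ((continuous_const.mul (conte t)).smul (conteg t))
    have iI : Integrable I σS := by
      apply aux_integrable_param σS hσsupp X hX hXb
        (fun p : EucV × EucV => e t p.2 p.1 * c t p.2)
      exact (conte t).mul ((hccont t).comp continuous_snd)
    have iJ : Integrable J σS := by
      apply aux_integrable_param σS hσsupp X hX hXb
        (fun p : EucV × EucV => e t p.2 p.1 * e t p.2 p.1)
      exact (conte t).mul (conte t)
    have hsplitΩ : ∫ Ω, (-(bal Ω) + (2 * σs) * I Ω - (2 * σt) * J Ω) ∂σS
        = -(∫ Ω, bal Ω ∂σS) + (2 * σs) * (∫ Ω, I Ω ∂σS) - (2 * σt) * (∫ Ω, J Ω ∂σS) := by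
      have hs1 := integral_sub (μ := σS)
        (f := fun Ω => -(bal Ω) + (2 * σs) * I Ω) (g := fun Ω => (2 * σt) * J Ω)
        (ibal.neg.add (iI.const_mul _)) (iJ.const_mul _)
      have hs2 := integral_add (μ := σS) (f := fun Ω => -(bal Ω))
        (g := fun Ω => (2 * σs) * I Ω) ibal.neg (iI.const_mul _)
      rw [hs1, hs2, integral_neg, integral_const_mul, integral_const_mul]
    have hbalnn : 0 ≤ ∫ Ω, bal Ω ∂σS := by
      apply integral_nonneg_of_ae
      filter_upwards [aux_ae_sigma σS hσsupp] with Ω hΩ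
      exact step2 Ω hΩ
    have hJnn : 0 ≤ ∫ Ω, J Ω ∂σS :=
      integral_nonneg fun Ω => integral_nonneg fun x => mul_self_nonneg _
    -- the scattering estimate
    have h4πc : ∀ x : EucV, ∫ Ω', e t x Ω' ∂σS = (4 * π) * c t x := by
      intro x
      rw [hcdef]
      field_simp
    have hswapI : ∫ Ω, I Ω ∂σS = ∫ x in X, (∫ Ω', e t x Ω' * c t x ∂σS) := by
      apply integral_integral_swap (f := fun Ω x => e t x Ω * c t x)
      exact aux_integrable_prod σS hσsupp X hX hXb _
        ((conte t).mul ((hccont t).comp continuous_snd))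
    have hinner : ∀ x : EucV, ∫ Ω', e t x Ω' * c t x ∂σS = (4 * π) * (c t x * c t x) := by
      intro x
      rw [integral_mul_const, h4πc x]
      ring
    have hEswap : ∫ x in X, (∫ Ω', e t x Ω' * e t x Ω' ∂σS) = E t := by
      rw [hEdef]
      simp only []
      rw [integral_prod _ (hFeInt t)]
      exact (integral_integral_swap (f := fun Ω x => e t x Ω * e t x Ω)
        (aux_integrable_prod σS hσsupp X hX hXb _ ((conte t).mul (conte t)))).symm
    have hCS : ∀ x : EucV, (4 * π) * (c t x * c t x)
        ≤ (M / (4 * π)) * ∫ Ω', e t x Ω' * e t x Ω' ∂σS := by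
      intro x
      have hcs := aux_cs σS (fun Ω' => e t x Ω') (hintΩ t x) (hintΩ2 t x)
      rw [h4πc x] at hcs
      rw [div_mul_eq_mul_div, le_div_iff₀ (by positivity)]
      nlinarith [hcs]
    have hIbound : ∫ Ω, I Ω ∂σS ≤ (M / (4 * π)) * E t := by
      rw [hswapI, ← hEswap]
      have hcongr : ∫ x in X, (∫ Ω', e t x Ω' * c t x ∂σS)
          = ∫ x in X, (4 * π) * (c t x * c t x) :=
        integral_congr_ae (Filter.Eventually.of_forall fun x => hinner x)
      rw [hcongr, ← integral_const_mul]
      apply integral_mono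
      · exact aux_integrableOn_X X hXb _
          (continuous_const.mul ((hccont t).mul (hccont t)))
      · apply Integrable.const_mul
        exact aux_integrableOn_param σS hσsupp X hX hXb
          (fun p : EucV × EucV => e t p.2 p.1 * e t p.2 p.1) ((conte t).mul (conte t))
      · exact fun x => hCS x
    -- combine
    rw [hsplitP, hcongrΩ, hsplitΩ]
    have hEnnt : 0 ≤ E t := integral_nonneg fun p => mul_self_nonneg _
    have h1 : (2 * σs) * (∫ Ω, I Ω ∂σS) ≤ (2 * σs) * ((M / (4 * π)) * E t) :=
      mul_le_mul_of_nonneg_left hIbound (by positivity)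
    have h2 : (2 * σs) * ((M / (4 * π)) * E t) = Cst * E t := by
      rw [hCstdef]
      field_simp
      ring
    have h3 : 0 ≤ (2 * σt) * (∫ Ω, J Ω ∂σS) := mul_nonneg (by positivity) hJnn
    linarith
  -- Gronwall
  have hE0 : E 0 = 0 := by
    rw [hEdef]
    apply integral_eq_zero_of_ae
    filter_upwards [aux_ae_prod σS hσsupp X hX hXb] with p hp
    have h0 := hic p.2 (subset_closure hp.2) p.1 hp.1
    simp [hFedef, h0]
  have hEnn : ∀ s : ℝ, 0 ≤ E s := fun s => integral_nonneg fun p => mul_self_nonneg _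
  have hEzero : ∀ t ∈ Icc 0 T, E t = 0 := by
    intro t ht
    set G : ℝ → ℝ := fun s => E s * exp (-Cst * s) with hGdef
    have hGderiv : ∀ s : ℝ, HasDerivAt G
        (((∫ p, Fe' s p ∂ν) - Cst * E s) * exp (-Cst * s)) s := by
      intro s
      have hd := (hEderiv s).mul (((hasDerivAt_id s).const_mul (-Cst)).exp)
      simp only [id_eq] at hd
      have habs : ∀ A Es ex : ℝ, (A - Cst * Es) * ex = A * ex + Es * (ex * (-Cst * 1)) := by
        intro A Es ex; ring
      rw [habs]
      exact hd
    have hGanti : AntitoneOn G (Icc 0 T) := by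
      apply antitoneOn_of_deriv_nonpos (convex_Icc 0 T)
      · exact (Differentiable.continuous fun s => (hGderiv s).differentiableAt).continuousOn
      · exact fun s _ => (hGderiv s).differentiableAt.differentiableWithinAt
      · intro s hs
        rw [interior_Icc] at hs
        rw [(hGderiv s).deriv]
        have hsIcc : s ∈ Icc 0 T := Ioo_subset_Icc_self hs
        have hkv := hkey s hsIcc
        exact mul_nonpos_of_nonpos_of_nonneg (by linarith) (exp_pos _).le
    have hG0 : G 0 = 0 := by simp [hGdef, hE0]
    have hGle : G t ≤ 0 := by
      rw [← hG0]
      exact hGanti (left_mem_Icc.2 hT.le) ht ht.1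
    have hGge : 0 ≤ G t := mul_nonneg (hEnn t) (exp_pos _).le
    have : G t = 0 := le_antisymm hGle hGge
    have hexpne : exp (-Cst * t) ≠ 0 := (exp_pos _).ne'
    rw [hGdef] at this
    simp only [] at this
    exact (mul_eq_zero.1 this).resolve_right hexpne
  -- pointwise vanishing on X
  have hvanish : ∀ t ∈ Icc 0 T, ∀ x ∈ X, ∀ Ω : EucV, ‖Ω‖ = 1 → e t x Ω = 0 := by
    intro t ht x₀ hx₀ Ω₀ hΩ₀
    by_contra hne
    have hEt : E t = 0 := hEzero t ht
    have hdd : 0 < e t x₀ Ω₀ * e t x₀ Ω₀ := mul_self_pos.2 hne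
    set d2 : ℝ := e t x₀ Ω₀ * e t x₀ Ω₀ with hd2def
    have hcontp : Continuous (fun p : EucV × EucV => Fe t p) := (conte t).mul (conte t)
    have hU : IsOpen {p : EucV × EucV | d2 / 2 < Fe t p} :=
      isOpen_lt continuous_const hcontp
    have hmem : (Ω₀, x₀) ∈ {p : EucV × EucV | d2 / 2 < Fe t p} := by
      simp only [mem_setOf_eq, hFedef]
      exact half_lt_self hdd
    obtain ⟨O, V, hO, hΩO, hV, hxV, hprod⟩ := mem_nhds_prod_iff'.1 (hU.mem_nhds hmem)
    set s := O ×ˢ (V ∩ X) with hsdef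
    have hsm : MeasurableSet s := hO.measurableSet.prod (hV.measurableSet.inter hX)
    have hν_s_pos : 0 < ν s := by
      rw [hνdef, hsdef, Measure.prod_prod]
      apply ENNReal.mul_pos
      · exact (hσfull O hO ⟨Ω₀, hΩO, hΩ₀⟩).ne'
      · rw [Measure.restrict_eq_self _ inter_subset_right]
        exact ((hV.inter hXopen).measure_pos volume ⟨x₀, hxV, hx₀⟩).ne'
    have hν_s_fin : ν s ≠ ⊤ := measure_ne_top ν s
    have hlow : d2 / 2 * (ν s).toReal ≤ ∫ p in s, Fe t p ∂ν := by
      rw [mul_comm, ← smul_eq_mul, ← measureReal_def]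
      apply setIntegral_ge_of_const_le hsm hν_s_fin
      · intro p hp
        have hpU : p ∈ {p : EucV × EucV | d2 / 2 < Fe t p} := by
          have : (p.1, p.2) ∈ O ×ˢ V := mk_mem_prod hp.1 hp.2.1
          exact hprod this
        exact hpU.le
      · exact (hFeInt t).integrableOn
    have hup : ∫ p in s, Fe t p ∂ν ≤ E t :=
      setIntegral_le_integral (hFeInt t) (Filter.Eventually.of_forall fun p => mul_self_nonneg _)
    have htR : 0 < (ν s).toReal := ENNReal.toReal_pos hν_s_pos.ne' hν_s_fin
    nlinarith [hlow, hup, htR, hdd, hEt]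
  -- extend to the closure
  intro t ht x hx Ω hΩ
  have hclosed : IsClosed {y : EucV | e t y Ω = 0} :=
    isClosed_eq (contex t Ω) continuous_const
  have hsub : closure X ⊆ {y : EucV | e t y Ω = 0} :=
    closure_minimal (fun y hy => hvanish t ht y hy Ω hΩ) hclosed
  exact hsub hx

/-- Uniqueness of C¹ solutions of the initial–inflow-boundary
value problem for `∂_t ψ + Ω·∇_x ψ = σ_s Sψ − σ_t ψ` on a bounded C¹ domain
`X ⊂ ℝ³` (C¹ regularity encoded by the Gauss–Green identity `hdiv`): two C¹
solutions with the same initial data and the same inflow boundary data on `γ₋`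
coincide. -/
theorem transport_uniqueness
    (T : ℝ) (hT : 0 < T)
    (X : Set EucV) (hX : MeasurableSet X) (hXopen : IsOpen X)
    (hXb : Bornology.IsBounded X) (hXne : X.Nonempty)
    (B : Set EucV) (hB : B = frontier X)
    (μB : Measure EucV) [IsFiniteMeasure μB] (hμB : μB Bᶜ = 0)
    (n : EucV → EucV) (hn : ∀ x ∈ B, ‖n x‖ = 1)
    (hdiv : ∀ (Ω : EucV) (f : EucV → ℝ) (fgrad : EucV → EucV),
      ContinuousOn f (closure X) →
      (∀ x ∈ X, HasGradientAt f (fgrad x) x) →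
      ContinuousOn fgrad (closure X) →
      ∫ x in X, ⟪Ω, fgrad x⟫ = ∫ x in B, f x * ⟪Ω, n x⟫ ∂μB)
    (σS : Measure EucV) [IsFiniteMeasure σS]
    (hσsupp : σS {Ω : EucV | ‖Ω‖ = 1}ᶜ = 0)
    -- the surface measure of S² charges every relatively open set of the sphere
    (hσfull : ∀ O : Set EucV, IsOpen O → (O ∩ {Ω : EucV | ‖Ω‖ = 1}).Nonempty → 0 < σS O)
    (σs σt : ℝ) (hσs : 0 ≤ σs) (hσt : 0 ≤ σt)
    (Sop : (EucV → EucV → ℝ) → EucV → EucV → ℝ)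
    (hSop : ∀ f x Ω, Sop f x Ω = (1 / (4 * π)) * ∫ Ω', f x Ω' ∂σS)
    (ψ₁ ψ₂ ψ₁t ψ₂t : ℝ → EucV → EucV → ℝ)
    (ψ₁grad ψ₂grad : ℝ → EucV → EucV → EucV)
    (hψ₁t : ∀ t x Ω, HasDerivAt (fun s => ψ₁ s x Ω) (ψ₁t t x Ω) t)
    (hψ₂t : ∀ t x Ω, HasDerivAt (fun s => ψ₂ s x Ω) (ψ₂t t x Ω) t)
    (hψ₁grad : ∀ t x Ω, HasGradientAt (fun y => ψ₁ t y Ω) (ψ₁grad t x Ω) x)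
    (hψ₂grad : ∀ t x Ω, HasGradientAt (fun y => ψ₂ t y Ω) (ψ₂grad t x Ω) x)
    (hcont₁ : Continuous (fun p : ℝ × EucV × EucV => ψ₁ p.1 p.2.1 p.2.2))
    (hcont₂ : Continuous (fun p : ℝ × EucV × EucV => ψ₂ p.1 p.2.1 p.2.2))
    (hcont₁t : Continuous (fun p : ℝ × EucV × EucV => ψ₁t p.1 p.2.1 p.2.2))
    (hcont₂t : Continuous (fun p : ℝ × EucV × EucV => ψ₂t p.1 p.2.1 p.2.2))
    (hcont₁g : Continuous (fun p : ℝ × EucV × EucV => ψ₁grad p.1 p.2.1 p.2.2))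
    (hcont₂g : Continuous (fun p : ℝ × EucV × EucV => ψ₂grad p.1 p.2.1 p.2.2))
    (hpde₁ : ∀ t ∈ Icc 0 T, ∀ x ∈ X, ∀ Ω : EucV, ‖Ω‖ = 1 →
      ψ₁t t x Ω + ⟪Ω, ψ₁grad t x Ω⟫ = σs * Sop (ψ₁ t) x Ω - σt * ψ₁ t x Ω)
    (hpde₂ : ∀ t ∈ Icc 0 T, ∀ x ∈ X, ∀ Ω : EucV, ‖Ω‖ = 1 →
      ψ₂t t x Ω + ⟪Ω, ψ₂grad t x Ω⟫ = σs * Sop (ψ₂ t) x Ω - σt * ψ₂ t x Ω)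
    (hic : ∀ x ∈ closure X, ∀ Ω : EucV, ‖Ω‖ = 1 → ψ₁ 0 x Ω = ψ₂ 0 x Ω)
    (hbc : ∀ t ∈ Icc 0 T, ∀ x ∈ B, ∀ Ω : EucV, ‖Ω‖ = 1 → ⟪n x, Ω⟫ < 0 →
      ψ₁ t x Ω = ψ₂ t x Ω) :
    ∀ t ∈ Icc 0 T, ∀ x ∈ closure X, ∀ Ω : EucV, ‖Ω‖ = 1 →
      ψ₁ t x Ω = ψ₂ t x Ω := by
  have heg : ∀ t x Ω, HasGradientAt (fun y => ψ₁ t y Ω - ψ₂ t y Ω)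
      (ψ₁grad t x Ω - ψ₂grad t x Ω) x := by
    intro t x Ω
    have h := ((hasGradientAt_iff_hasFDerivAt).1 (hψ₁grad t x Ω)).sub
      ((hasGradientAt_iff_hasFDerivAt).1 (hψ₂grad t x Ω))
    rw [hasGradientAt_iff_hasFDerivAt, map_sub]
    exact h
  have key := aux_energy T hT X hX hXopen hXb B hB μB hμB n hdiv σS hσsupp hσfull σs σt hσs hσt
    (fun t x Ω => ψ₁ t x Ω - ψ₂ t x Ω) (fun t x Ω => ψ₁t t x Ω - ψ₂t t x Ω)
    (fun t x Ω => ψ₁grad t x Ω - ψ₂grad t x Ω)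
    (fun t x Ω => (hψ₁t t x Ω).sub (hψ₂t t x Ω))
    heg
    (hcont₁.sub hcont₂) (hcont₁t.sub hcont₂t) (hcont₁g.sub hcont₂g)
    ?_ ?_ ?_
  · intro t ht x hx Ω hΩ
    exact sub_eq_zero.1 (key t ht x hx Ω hΩ)
  · -- PDE for the difference
    intro t ht x hx Ω hΩ
    have h1 := hpde₁ t ht x hx Ω hΩ
    have h2 := hpde₂ t ht x hx Ω hΩ
    rw [hSop] at h1
    rw [hSop] at h2
    have hsub : ∫ Ω', (ψ₁ t x Ω' - ψ₂ t x Ω') ∂σS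
        = (∫ Ω', ψ₁ t x Ω' ∂σS) - ∫ Ω', ψ₂ t x Ω' ∂σS := by
      apply integral_sub
      · exact aux_integrable_sigma σS hσsupp _
          (hcont₁.comp (continuous_const.prodMk (continuous_const.prodMk continuous_id)))
      · exact aux_integrable_sigma σS hσsupp _
          (hcont₂.comp (continuous_const.prodMk (continuous_const.prodMk continuous_id)))
    rw [inner_sub_right, hsub]
    linear_combination h1 - h2
  · intro x hx Ω hΩ
    exact sub_eq_zero.2 (hic x hx Ω hΩ)
  · intro t ht x hx Ω hΩ hlt
    exact sub_eq_zero.2 (hbc t ht x hx Ω hΩ hlt)
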